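/- Let N ≥ 1 be an integer and 0 < α < 1, 0 < β < 1. Define D₁ = 1 + αβ/(1−α) and η = β/((1−α)D₁) (so that (1−α)η/β = (1−η)/(1−β) = D₁⁻¹ and 0 < η < 1). Then the distribution φ₀(i) = b(i;N;η) satisfies the detailed-balance (reversibility) condition K(i,j)·φ₀(j) = K(j,i)·φ₀(i) for all integers 0 ≤ i, j ≤ N. -/

import Mathlib

/-- The binomial distribution `b(k;n;p) = C(n,k) p^k (1-p)^(n-k)`
(automatically `0` when `k > n` since `C(n,k) = 0`). -/
noncomputable def binom (n k : ℕ) (p : ℝ) : ℝ :=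
  (n.choose k : ℝ) * p ^ k * (1 - p) ^ (n - k)

/-- One-variable cumulative Bernoulli trial transition kernel on `{0,…,N}`:
`K(j,i) = ∑_{k=0}^{min(i,j)} b(k;i;α) b(j-k;N-k;β)`, the probability of moving
from state `i` to state `j`. -/
noncomputable def K1 (N : ℕ) (α β : ℝ) (j i : ℕ) : ℝ :=
  ∑ k ∈ Finset.range (min i j + 1), binom i k α * binom (N - k) (j - k) β

private lemma choose_key (k a b m : ℕ) (ha : a ≤ m) (hb : b ≤ m) :
    (k + b).choose k * m.choose a * (k + m).choose (k + b) =
    (k + a).choose k * m.choose b * (k + m).choose (k + a) := by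
  have h1 : (k + m).choose (k + b) * (k + b).choose k
      = (k + m).choose k * m.choose b := by
    have := Nat.choose_mul (n := k + m) (k := k + b) (s := k)
      (by omega)
    simpa using this
  have h2 : (k + m).choose (k + a) * (k + a).choose k
      = (k + m).choose k * m.choose a := by
    have := Nat.choose_mul (n := k + m) (k := k + a) (s := k)
      (by omega)
    simpa using this
  calc (k + b).choose k * m.choose a * (k + m).choose (k + b)
      = ((k + m).choose (k + b) * (k + b).choose k) * m.choose a := by ring
    _ = ((k + m).choose k * m.choose b) * m.choose a := by rw [h1]
    _ = ((k + m).choose k * m.choose a) * m.choose b := by ring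
    _ = ((k + m).choose (k + a) * (k + a).choose k) * m.choose b := by rw [h2]
    _ = (k + a).choose k * m.choose b * (k + m).choose (k + a) := by ring

private lemma pow_key (α β η D : ℝ)
    (e1 : (1 - α) * η = β * D⁻¹) (e2 : 1 - η = (1 - β) * D⁻¹)
    (k a b c d : ℕ) (h : b + c = a + d) :
    (1 - α) ^ b * β ^ a * (1 - β) ^ d * η ^ (k + b) * (1 - η) ^ c =
    (1 - α) ^ a * β ^ b * (1 - β) ^ c * η ^ (k + a) * (1 - η) ^ d := by
  have key : ∀ x y : ℕ, x ≤ a + b → y ≤ c + d → x + y = a + d →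
      (1 - α) ^ x * β ^ (a + b - x) * (1 - β) ^ (c + d - y) * η ^ (k + x)
        * (1 - η) ^ y
      = β ^ (a + b) * (1 - β) ^ (c + d) * D⁻¹ ^ (a + d) * η ^ k := by
    intro x y hx hy hxy
    calc (1 - α) ^ x * β ^ (a + b - x) * (1 - β) ^ (c + d - y) * η ^ (k + x)
          * (1 - η) ^ y
        = ((1 - α) * η) ^ x * (1 - η) ^ y
            * (β ^ (a + b - x) * (1 - β) ^ (c + d - y) * η ^ k) := by
          rw [mul_pow, pow_add]; ring
      _ = (β * D⁻¹) ^ x * ((1 - β) * D⁻¹) ^ y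
            * (β ^ (a + b - x) * (1 - β) ^ (c + d - y) * η ^ k) := by
          rw [e1, e2]
      _ = (β ^ x * β ^ (a + b - x)) * ((1 - β) ^ y * (1 - β) ^ (c + d - y))
            * (D⁻¹ ^ x * D⁻¹ ^ y) * η ^ k := by
          rw [mul_pow, mul_pow]; ring
      _ = β ^ (a + b) * (1 - β) ^ (c + d) * D⁻¹ ^ (a + d) * η ^ k := by
          rw [← pow_add, ← pow_add, ← pow_add, Nat.add_sub_cancel' hx,
            Nat.add_sub_cancel' hy, hxy]
  have hL := key b c (by omega) (by omega) h
  have hR := key a d (by omega) (by omega) rfl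
  rw [show a + b - b = a by omega, show c + d - c = d by omega] at hL
  rw [show a + b - a = b by omega, show c + d - d = c by omega] at hR
  rw [hL, hR]

theorem stmt_0 (N : ℕ) (hN : 1 ≤ N) (α β : ℝ)
    (hα0 : 0 < α) (hα1 : α < 1) (hβ0 : 0 < β) (hβ1 : β < 1)
    (D₁ : ℝ) (hD : D₁ = 1 + α * β / (1 - α))
    (η : ℝ) (hη : η = β / ((1 - α) * D₁)) :
    ∀ i j : ℕ, i ≤ N → j ≤ N →
      K1 N α β i j * binom N j η = K1 N α β j i * binom N i η := by
  have hα1' : (1 : ℝ) - α ≠ 0 := by linarith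
  have h1α : (0:ℝ) < 1 - α := by linarith
  have hc0 : (0:ℝ) < 1 - α + α * β := by nlinarith
  have hcne : (1:ℝ) - α + α * β ≠ 0 := ne_of_gt hc0
  have hD' : D₁ = (1 - α + α * β) / (1 - α) := by
    rw [hD]; field_simp
  have hDpos : 0 < D₁ := by
    rw [hD']; positivity
  have hD0 : D₁ ≠ 0 := ne_of_gt hDpos
  have hη' : η = β / (1 - α + α * β) := by
    rw [hη, hD']; field_simp
  have e1 : (1 - α) * η = β * D₁⁻¹ := by
    rw [hη', hD']; field_simp
  have e2 : 1 - η = (1 - β) * D₁⁻¹ := by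
    rw [hη', hD']; field_simp; ring
  intro i j hi hj
  unfold K1
  rw [Finset.sum_mul, Finset.sum_mul, min_comm j i]
  refine Finset.sum_congr rfl fun k hk => ?_
  rw [Finset.mem_range] at hk
  have hki : k ≤ i := by omega
  have hkj : k ≤ j := by omega
  -- introduce a = i - k, b = j - k, m = N - k, c = m - b, d = m - a
  obtain ⟨a, ha⟩ : ∃ a, i = k + a := ⟨i - k, by omega⟩
  obtain ⟨b, hb⟩ : ∃ b, j = k + b := ⟨j - k, by omega⟩
  obtain ⟨m, hm⟩ : ∃ m, N = k + m := ⟨N - k, by omega⟩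
  have ham : a ≤ m := by omega
  have hbm : b ≤ m := by omega
  subst ha hb hm
  unfold binom
  have s1 : k + b - k = b := by omega
  have s2 : k + a - k = a := by omega
  have s3 : k + m - k = m := by omega
  have s4 : k + m - (k + a) = m - a := by omega
  have s5 : k + m - (k + b) = m - b := by omega
  rw [s1, s2, s3, s4, s5]
  have hc := choose_key k a b m ham hbm
  have hp := pow_key α β η D₁ e1 e2 k a b (m - b) (m - a) (by omega)
  calc ((k + b).choose k : ℝ) * α ^ k * (1 - α) ^ b *
        ((m.choose a : ℝ) * β ^ a * (1 - β) ^ (m - a)) *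
        (((k + m).choose (k + b) : ℝ) * η ^ (k + b) * (1 - η) ^ (m - b))
      = (((k + b).choose k : ℝ) * (m.choose a : ℝ) * ((k + m).choose (k + b) : ℝ))
        * α ^ k *
        ((1 - α) ^ b * β ^ a * (1 - β) ^ (m - a) * η ^ (k + b) * (1 - η) ^ (m - b)) := by
        ring
    _ = (((k + a).choose k : ℝ) * (m.choose b : ℝ) * ((k + m).choose (k + a) : ℝ))
        * α ^ k *
        ((1 - α) ^ a * β ^ b * (1 - β) ^ (m - b) * η ^ (k + a) * (1 - η) ^ (m - a)) := by
        rw [hp]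
        congr 2
        exact_mod_cast hc
    _ = ((k + a).choose k : ℝ) * α ^ k * (1 - α) ^ a *
        ((m.choose b : ℝ) * β ^ b * (1 - β) ^ (m - b)) *
        (((k + m).choose (k + a) : ℝ) * η ^ (k + a) * (1 - η) ^ (m - a)) := by
        ring
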